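/- Norm decomposition with projections: for any matrices B*, B̂ ∈ ℝ^{d₁×d₂}, writing Θ = B̂ − B*, one has ‖B*‖_* − ‖B̂‖_* ≤ ‖P_{B*}(Θ)‖_* − ‖P⊥_{B*}(Θ)‖_*. -/

import Mathlib

noncomputable def frob {d1 d2 : ℕ} (A : Matrix (Fin d1) (Fin d2) ℝ) : ℝ :=
  Real.sqrt (∑ i, ∑ j, (A i j) ^ 2)

noncomputable def nuclearNorm {d1 d2 : ℕ} (A : Matrix (Fin d1) (Fin d2) ℝ) : ℝ :=
  ∑ j, Real.sqrt ((Matrix.isHermitian_conjTranspose_mul_self A).eigenvalues j)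

/-- Matrix of the orthogonal projection onto a subspace of Euclidean space. -/
noncomputable def projMat {d : ℕ} (V : Submodule ℝ (EuclideanSpace ℝ (Fin d))) :
    Matrix (Fin d) (Fin d) ℝ :=
  LinearMap.toMatrix (EuclideanSpace.basisFun (Fin d) ℝ).toBasis
    (EuclideanSpace.basisFun (Fin d) ℝ).toBasis
    (V.subtype ∘ₗ (V.orthogonalProjectionOnto).toLinearMap)

/-- The span of the left singular vectors of `E` (its column space). -/
noncomputable def Vl {d1 d2 : ℕ} (E : Matrix (Fin d1) (Fin d2) ℝ) :
    Submodule ℝ (EuclideanSpace ℝ (Fin d1)) :=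
  LinearMap.range (Matrix.toEuclideanLin E)

/-- The span of the right singular vectors of `E` (its row space). -/
noncomputable def Vr {d1 d2 : ℕ} (E : Matrix (Fin d1) (Fin d2) ℝ) :
    Submodule ℝ (EuclideanSpace ℝ (Fin d2)) :=
  LinearMap.range (Matrix.toEuclideanLin E.transpose)

/-- `P⊥_E(M) = Proj_{V_l(E)^⊥} M Proj_{V_r(E)^⊥}`. -/
noncomputable def Pperp {d1 d2 : ℕ} (E M : Matrix (Fin d1) (Fin d2) ℝ) :
    Matrix (Fin d1) (Fin d2) ℝ :=
  projMat (Vl E)ᗮ * M * projMat (Vr E)ᗮ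

/-- `P_E(M) = M − P⊥_E(M)`. -/
noncomputable def Pproj {d1 d2 : ℕ} (E M : Matrix (Fin d1) (Fin d2) ℝ) :
    Matrix (Fin d1) (Fin d2) ℝ :=
  M - Pperp E M

section Aux
set_option linter.unusedSectionVars false
open Matrix

variable {n : Type*} [Fintype n] [DecidableEq n]

open scoped MatrixOrder in
noncomputable def Matrix.PosSemidef.sqrt {A : Matrix n n ℝ} (_hA : A.PosSemidef) : Matrix n n ℝ :=
  CFC.sqrt A

open scoped MatrixOrder in
lemma Matrix.PosSemidef.posSemidef_sqrt {A : Matrix n n ℝ} (hA : A.PosSemidef) :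
    hA.sqrt.PosSemidef :=
  Matrix.nonneg_iff_posSemidef.mp (CFC.sqrt_nonneg A)

open scoped MatrixOrder in
lemma Matrix.PosSemidef.sqrt_mul_self {A : Matrix n n ℝ} (hA : A.PosSemidef) :
    hA.sqrt * hA.sqrt = A :=
  CFC.sqrt_mul_sqrt_self A hA.nonneg

open scoped MatrixOrder in
lemma Matrix.PosSemidef.eq_sqrt_of_sq_eq {A B : Matrix n n ℝ} (hB : B.PosSemidef)
    (hA : A.PosSemidef) (h : B ^ 2 = A) : B = hA.sqrt :=
  ((CFC.sqrt_eq_iff A B hA.nonneg hB.nonneg).mpr (by rw [← sq]; exact h)).symm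

-- real conjTranspose = transpose
lemma ctR {m' n' : Type*} (A : Matrix m' n' ℝ) : Aᴴ = Aᵀ := by
  ext i j; simp [conjTranspose_apply]

-- trace of sqrt = sum of sqrt eigenvalues
open scoped MatrixOrder in
lemma trace_sqrt {A : Matrix n n ℝ} (hA : A.PosSemidef) :
    hA.sqrt.trace = ∑ i, Real.sqrt (hA.1.eigenvalues i) := by
  rw [Matrix.PosSemidef.sqrt, CFC.sqrt_eq_cfc, cfc_nnreal_eq_real _ A, hA.1.cfc_eq,
    IsHermitian.cfc, Unitary.conjStarAlgAut_apply, Matrix.trace_mul_comm, ← mul_assoc,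
    Unitary.coe_star_mul_self, one_mul, Matrix.trace_diagonal]
  simp [hA.eigenvalues_nonneg]

lemma sqrt_congr {A B : Matrix n n ℝ} (h : A = B) (hA : A.PosSemidef) (hB : B.PosSemidef) :
    hA.sqrt = hB.sqrt := by subst h; rfl

-- M = 0 if trace (Mᴴ M) = 0
lemma eq_zero_of_trace_ct_mul_self {m : Type*} [Fintype m] (M : Matrix m n ℝ)
    (h : (Mᴴ * M).trace = 0) : M = 0 := by
  have h' : ∑ j, ∑ i, (M i j)^2 = 0 := by
    rw [← h]; simp [Matrix.trace, Matrix.mul_apply, Matrix.diag, sq]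
  ext i j
  have := (Finset.sum_eq_zero_iff_of_nonneg (fun j _ => Finset.sum_nonneg
    (fun i _ => sq_nonneg (M i j)))).mp h' j (Finset.mem_univ j)
  have := (Finset.sum_eq_zero_iff_of_nonneg (fun i _ => sq_nonneg (M i j))).mp
    this i (Finset.mem_univ i)
  simpa using pow_eq_zero_iff (n := 2) (by norm_num) |>.mp this

lemma sqrt_mul_sqrt_eq_zero {S T : Matrix n n ℝ} (hS : S.PosSemidef) (hT : T.PosSemidef)
    (h : S * T = 0) : hS.sqrt * hT.sqrt = 0 := by
  apply eq_zero_of_trace_ct_mul_self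
  have hct : (hS.sqrt * hT.sqrt)ᴴ = hT.sqrt * hS.sqrt := by
    rw [conjTranspose_mul, hS.posSemidef_sqrt.1, hT.posSemidef_sqrt.1]
  rw [hct]
  calc (hT.sqrt * hS.sqrt * (hS.sqrt * hT.sqrt)).trace
      = (hT.sqrt * (hS.sqrt * hS.sqrt) * hT.sqrt).trace := by noncomm_ring
    _ = (S * (hT.sqrt * hT.sqrt)).trace := by
        rw [mul_assoc hT.sqrt, hS.sqrt_mul_self, ← mul_assoc, Matrix.trace_mul_cycle, mul_assoc,
          ← mul_assoc, Matrix.trace_mul_comm]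
    _ = 0 := by rw [hT.sqrt_mul_self, h, Matrix.trace_zero]

lemma sqrt_add_of_mul_eq_zero {S T : Matrix n n ℝ} (hS : S.PosSemidef) (hT : T.PosSemidef)
    (h : S * T = 0) (h' : T * S = 0) (hST : (S + T).PosSemidef) :
    hST.sqrt = hS.sqrt + hT.sqrt := by
  refine ((hS.posSemidef_sqrt.add hT.posSemidef_sqrt).eq_sqrt_of_sq_eq hST ?_).symm
  have h1 := sqrt_mul_sqrt_eq_zero hS hT h
  have h2 := sqrt_mul_sqrt_eq_zero hT hS h'
  rw [pow_two, add_mul, mul_add, mul_add, h1, h2, hS.sqrt_mul_self, hT.sqrt_mul_self]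
  abel

lemma dot_mulVec_self {m' n' : Type*} [Fintype m'] [Fintype n'] (W : Matrix m' n' ℝ)
    (x : n' → ℝ) : (W *ᵥ x) ⬝ᵥ (W *ᵥ x) = x ⬝ᵥ ((Wᴴ * W) *ᵥ x) := by
  rw [ctR, ← Matrix.mulVec_mulVec, Matrix.mulVec_transpose, dotProduct_comm x,
    ← Matrix.dotProduct_mulVec]

lemma sum_mul_le_sqrt {ι : Type*} [Fintype ι] (f g : ι → ℝ) :
    ∑ i, f i * g i ≤ Real.sqrt (∑ i, f i ^ 2) * Real.sqrt (∑ i, g i ^ 2) := by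
  calc ∑ i, f i * g i ≤ |∑ i, f i * g i| := le_abs_self _
    _ = Real.sqrt ((∑ i, f i * g i) ^ 2) := (Real.sqrt_sq_eq_abs _).symm
    _ ≤ Real.sqrt ((∑ i, f i ^ 2) * ∑ i, g i ^ 2) :=
        Real.sqrt_le_sqrt (Finset.sum_mul_sq_le_sq_mul_sq _ f g)
    _ = _ := Real.sqrt_mul (Finset.sum_nonneg fun i _ => sq_nonneg _) _

lemma nuclearNorm_eq_trace_sqrt {d1 d2 : ℕ} (X : Matrix (Fin d1) (Fin d2) ℝ) :
    nuclearNorm X = (Matrix.posSemidef_conjTranspose_mul_self X).sqrt.trace := by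
  rw [trace_sqrt]; rfl

lemma nuclearNorm_congr {d1 d2 d3 : ℕ} (X : Matrix (Fin d1) (Fin d2) ℝ)
    (Y : Matrix (Fin d3) (Fin d2) ℝ) (h : Xᴴ * X = Yᴴ * Y) :
    nuclearNorm X = nuclearNorm Y := by
  have key : ∀ {A B : Matrix (Fin d2) (Fin d2) ℝ} (hA : A.IsHermitian) (hB : B.IsHermitian),
      A = B → ∑ j, Real.sqrt (hA.eigenvalues j) = ∑ j, Real.sqrt (hB.eigenvalues j) := by
    rintro A B hA hB rfl; rfl
  exact key _ _ h

lemma nuclearNorm_neg {d1 d2 : ℕ} (X : Matrix (Fin d1) (Fin d2) ℝ) :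
    nuclearNorm (-X) = nuclearNorm X :=
  nuclearNorm_congr _ _ (by simp)

lemma nuclearNorm_add_of_orth {d1 d2 : ℕ} (A N : Matrix (Fin d1) (Fin d2) ℝ)
    (h1 : Aᴴ * N = 0) (h2 : A * Nᴴ = 0) :
    nuclearNorm (A + N) = nuclearNorm A + nuclearNorm N := by
  have hNA : Nᴴ * A = 0 := by
    have := congrArg Matrix.conjTranspose h1
    simpa [Matrix.conjTranspose_mul] using this
  have hNAt : N * Aᴴ = 0 := by
    have := congrArg Matrix.conjTranspose h2
    simpa [Matrix.conjTranspose_mul] using this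
  have hgram : (A + N)ᴴ * (A + N) = Aᴴ * A + Nᴴ * N := by
    rw [Matrix.conjTranspose_add, Matrix.add_mul, Matrix.mul_add, Matrix.mul_add, h1, hNA]
    abel
  have hS := Matrix.posSemidef_conjTranspose_mul_self A
  have hT := Matrix.posSemidef_conjTranspose_mul_self N
  have hST := Matrix.posSemidef_conjTranspose_mul_self (A + N)
  have hST' : (Aᴴ * A + Nᴴ * N).PosSemidef := hgram ▸ hST
  have hmul : (Aᴴ * A) * (Nᴴ * N) = 0 := by
    have e : (Aᴴ * A) * (Nᴴ * N) = Aᴴ * ((A * Nᴴ) * N) := by simp only [Matrix.mul_assoc]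
    rw [e, h2, Matrix.zero_mul, Matrix.mul_zero]
  have hmul' : (Nᴴ * N) * (Aᴴ * A) = 0 := by
    have e : (Nᴴ * N) * (Aᴴ * A) = Nᴴ * ((N * Aᴴ) * A) := by simp only [Matrix.mul_assoc]
    rw [e, hNAt, Matrix.zero_mul, Matrix.mul_zero]
  rw [nuclearNorm_eq_trace_sqrt, nuclearNorm_eq_trace_sqrt, nuclearNorm_eq_trace_sqrt,
    sqrt_congr hgram hST hST', sqrt_add_of_mul_eq_zero hS hT hmul hmul' hST',
    Matrix.trace_add]

lemma trace_le_nuclearNorm {d1 d2 : ℕ} (W X : Matrix (Fin d1) (Fin d2) ℝ)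
    (hW : ∀ x : Fin d2 → ℝ, (W *ᵥ x) ⬝ᵥ (W *ᵥ x) ≤ x ⬝ᵥ x) :
    (Wᴴ * X).trace ≤ nuclearNorm X := by
  set hH := Matrix.isHermitian_conjTranspose_mul_self X with hHdef
  set U : Matrix (Fin d2) (Fin d2) ℝ := (hH.eigenvectorUnitary : Matrix (Fin d2) (Fin d2) ℝ) with hUdef
  have hUsU : U * star U = 1 := Matrix.mem_unitaryGroup_iff.mp hH.eigenvectorUnitary.2
  have hsUU : star U * U = 1 := Matrix.mem_unitaryGroup_iff'.mp hH.eigenvectorUnitary.2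
  have key : (Wᴴ * X).trace = ((W * U)ᴴ * (X * U)).trace := by
    rw [Matrix.conjTranspose_mul,
      show Uᴴ * Wᴴ * (X * U) = (star U) * (Wᴴ * X) * U by
        simp only [Matrix.star_eq_conjTranspose, Matrix.mul_assoc],
      Matrix.trace_mul_cycle, hUsU, Matrix.one_mul]
  have hZ : ∀ j, ∑ i, ((W * U) i j) ^ 2 ≤ 1 := by
    intro j
    have h1 : (fun i => (W * U) i j) = W *ᵥ (fun k => U k j) := by
      ext i; simp [Matrix.mul_apply, Matrix.mulVec, dotProduct]
    have h3 : ∑ i, ((W * U) i j) ^ 2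
        = (W *ᵥ (fun k => U k j)) ⬝ᵥ (W *ᵥ (fun k => U k j)) := by
      rw [← h1]; simp [dotProduct, sq]
    have h4 : (fun k => U k j) ⬝ᵥ (fun k => U k j) = 1 := by
      have := congrFun (congrFun hsUU j) j
      simpa [Matrix.mul_apply, Matrix.star_apply, Matrix.one_apply, dotProduct,
        mul_comm] using this
    rw [h3]
    calc (W *ᵥ (fun k => U k j)) ⬝ᵥ (W *ᵥ (fun k => U k j))
        ≤ (fun k => U k j) ⬝ᵥ (fun k => U k j) := hW _
      _ = 1 := h4
  have hY : ∀ j, ∑ i, ((X * U) i j) ^ 2 = hH.eigenvalues j := by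
    intro j
    have hdiag : star U * (Xᴴ * X) * U = Matrix.diagonal (RCLike.ofReal ∘ hH.eigenvalues) := by
      have := hH.conjStarAlgAut_star_eigenvectorUnitary
      rwa [Unitary.conjStarAlgAut_star_apply] at this
    have h5 : ((X * U)ᴴ * (X * U)) j j = hH.eigenvalues j := by
      rw [Matrix.conjTranspose_mul,
        show Uᴴ * Xᴴ * (X * U) = (star U) * (Xᴴ * X) * U by
          simp only [Matrix.star_eq_conjTranspose, Matrix.mul_assoc],
        hdiag]
      simp
    rw [← h5]
    simp [Matrix.mul_apply, Matrix.conjTranspose_apply, sq, mul_comm]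
  have entry : ((W * U)ᴴ * (X * U)).trace = ∑ j, ∑ i, (W * U) i j * (X * U) i j := by
    simp [Matrix.trace, Matrix.diag, Matrix.mul_apply, Matrix.conjTranspose_apply, mul_comm]
  rw [key, entry]
  have : nuclearNorm X = ∑ j, Real.sqrt (hH.eigenvalues j) := rfl
  rw [this]
  refine Finset.sum_le_sum fun j _ => ?_
  calc ∑ i, (W * U) i j * (X * U) i j
      ≤ Real.sqrt (∑ i, ((W * U) i j) ^ 2) * Real.sqrt (∑ i, ((X * U) i j) ^ 2) :=
        sum_mul_le_sqrt _ _
    _ ≤ Real.sqrt 1 * Real.sqrt (hH.eigenvalues j) := by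
        rw [hY]
        exact mul_le_mul_of_nonneg_right (Real.sqrt_le_sqrt (hZ j)) (Real.sqrt_nonneg _)
    _ = Real.sqrt (hH.eigenvalues j) := by rw [Real.sqrt_one, one_mul]

lemma exists_dual_witness {d1 d2 : ℕ} (X : Matrix (Fin d1) (Fin d2) ℝ) :
    ∃ W : Matrix (Fin d1) (Fin d2) ℝ,
      (∀ x : Fin d2 → ℝ, (W *ᵥ x) ⬝ᵥ (W *ᵥ x) ≤ x ⬝ᵥ x) ∧
      (Wᴴ * X).trace = nuclearNorm X := by
  set hH := Matrix.isHermitian_conjTranspose_mul_self X with hHdef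
  set eig := hH.eigenvalues with heigdef
  set U : Matrix (Fin d2) (Fin d2) ℝ := (hH.eigenvectorUnitary : Matrix (Fin d2) (Fin d2) ℝ)
    with hUdef
  have hUsU : U * star U = 1 := Matrix.mem_unitaryGroup_iff.mp hH.eigenvectorUnitary.2
  have hsUU : star U * U = 1 := Matrix.mem_unitaryGroup_iff'.mp hH.eigenvectorUnitary.2
  have heig : ∀ i, 0 ≤ eig i := Matrix.eigenvalues_conjTranspose_mul_self_nonneg X
  set Dp : Matrix (Fin d2) (Fin d2) ℝ :=
    Matrix.diagonal (fun i => if eig i = 0 then 0 else (Real.sqrt (eig i))⁻¹) with hDpdef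
  have hspec : Xᴴ * X = U * Matrix.diagonal eig * star U := by
    have h := hH.spectral_theorem
    rw [Unitary.conjStarAlgAut_apply] at h
    rwa [show RCLike.ofReal ∘ eig = eig from funext fun i => rfl] at h
  set W := X * (U * Dp * star U) with hWdef
  have hDpct : Dpᴴ = Dp := by
    rw [hDpdef, Matrix.diagonal_conjTranspose]
    congr 1
  have hWct : Wᴴ = U * Dp * star U * Xᴴ := by
    rw [hWdef, Matrix.conjTranspose_mul]
    congr 1
    rw [Matrix.conjTranspose_mul, Matrix.conjTranspose_mul, hDpct]
    simp only [Matrix.star_eq_conjTranspose, Matrix.conjTranspose_conjTranspose,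
      Matrix.mul_assoc]
  have hWX : Wᴴ * X = U * Matrix.diagonal (fun i => Real.sqrt (eig i)) * star U := by
    have e1 : Wᴴ * X = U * Dp * star U * (Xᴴ * X) := by
      rw [hWct]; simp only [Matrix.mul_assoc]
    have harg : (fun i => (if eig i = 0 then (0:ℝ) else (Real.sqrt (eig i))⁻¹) * eig i)
        = fun i => Real.sqrt (eig i) := by
      funext i
      by_cases h : eig i = 0
      · simp [h]
      · have hpos : 0 < eig i := lt_of_le_of_ne (heig i) (Ne.symm h)
        have hs : Real.sqrt (eig i) ≠ 0 := by positivity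
        rw [if_neg h]
        nth_rewrite 2 [← Real.mul_self_sqrt (heig i)]
        rw [inv_mul_cancel_left₀ hs]
    rw [e1, hspec,
      show U * Dp * star U * (U * Matrix.diagonal eig * star U)
          = U * (Dp * ((star U * U) * Matrix.diagonal eig)) * star U by
        simp only [Matrix.mul_assoc],
      hsUU, Matrix.one_mul, hDpdef, Matrix.diagonal_mul_diagonal, harg]
  have htr : (Wᴴ * X).trace = nuclearNorm X := by
    rw [hWX, Matrix.trace_mul_cycle, hsUU, Matrix.one_mul, Matrix.trace_diagonal]
    rfl
  refine ⟨W, fun x => ?_, htr⟩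
  set e : Fin d2 → ℝ := fun i => if eig i = 0 then 0 else 1 with hedef
  have hWW : Wᴴ * W = U * Matrix.diagonal e * star U := by
    have e1 : Wᴴ * W = U * Dp * star U * (Xᴴ * X) * (U * Dp * star U) := by
      rw [hWct, hWdef]; simp only [Matrix.mul_assoc]
    have harg2 : (fun i => (if eig i = 0 then (0:ℝ) else (Real.sqrt (eig i))⁻¹) *
        (eig i * if eig i = 0 then 0 else (Real.sqrt (eig i))⁻¹)) = e := by
      funext i
      by_cases h : eig i = 0
      · simp [hedef, h]
      · have hpos : 0 < eig i := lt_of_le_of_ne (heig i) (Ne.symm h)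
        have hs : Real.sqrt (eig i) ≠ 0 := by positivity
        rw [hedef]
        simp only [if_neg h]
        nth_rewrite 1 [← Real.mul_self_sqrt (heig i)]
        field_simp
        rw [Real.sqrt_sq (Real.sqrt_nonneg _), Real.mul_self_sqrt (heig i)]
    rw [e1, hspec,
      show U * Dp * star U * (U * Matrix.diagonal eig * star U) * (U * Dp * star U)
          = U * (Dp * ((star U * U) * (Matrix.diagonal eig * ((star U * U) * Dp)))) * star U by
        simp only [Matrix.mul_assoc],
      hsUU, Matrix.one_mul, Matrix.one_mul, hDpdef, Matrix.diagonal_mul_diagonal,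
      Matrix.diagonal_mul_diagonal, harg2]
  have step1 : (W *ᵥ x) ⬝ᵥ (W *ᵥ x)
      = (star U *ᵥ x) ⬝ᵥ (Matrix.diagonal e *ᵥ (star U *ᵥ x)) := by
    rw [dot_mulVec_self, hWW, ← Matrix.mulVec_mulVec, ← Matrix.mulVec_mulVec,
      Matrix.dotProduct_mulVec x U, ← Matrix.mulVec_transpose,
      show Uᵀ = star U by rw [Matrix.star_eq_conjTranspose, ctR]]
  have step2 : (star U *ᵥ x) ⬝ᵥ (Matrix.diagonal e *ᵥ (star U *ᵥ x))
      ≤ (star U *ᵥ x) ⬝ᵥ (star U *ᵥ x) := by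
    set y := star U *ᵥ x with hy
    rw [dotProduct, dotProduct]
    refine Finset.sum_le_sum fun i _ => ?_
    rw [Matrix.mulVec_diagonal]
    by_cases h : eig i = 0
    · simp only [hedef, if_pos h, zero_mul, mul_zero]
      exact mul_self_nonneg _
    · simp [hedef, if_neg h]
  have step3 : (star U *ᵥ x) ⬝ᵥ (star U *ᵥ x) = x ⬝ᵥ x := by
    rw [dot_mulVec_self,
      show (star U)ᴴ * star U = U * star U by
        rw [Matrix.star_eq_conjTranspose, Matrix.conjTranspose_conjTranspose],
      hUsU, Matrix.one_mulVec]
  calc (W *ᵥ x) ⬝ᵥ (W *ᵥ x) = _ := step1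
    _ ≤ _ := step2
    _ = x ⬝ᵥ x := step3

lemma nuclearNorm_add_le {d1 d2 : ℕ} (X Y : Matrix (Fin d1) (Fin d2) ℝ) :
    nuclearNorm (X + Y) ≤ nuclearNorm X + nuclearNorm Y := by
  obtain ⟨W, hc, he⟩ := exists_dual_witness (X + Y)
  rw [← he, Matrix.mul_add, Matrix.trace_add]
  exact add_le_add (trace_le_nuclearNorm W X hc) (trace_le_nuclearNorm W Y hc)

lemma projMat_orthComp_mul {d1 d2 : ℕ} (E : Matrix (Fin d1) (Fin d2) ℝ) :
    projMat (Vl E)ᗮ * E = 0 := by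
  have hE : E = LinearMap.toMatrix (EuclideanSpace.basisFun (Fin d2) ℝ).toBasis
      (EuclideanSpace.basisFun (Fin d1) ℝ).toBasis (Matrix.toEuclideanLin E) :=
    (LinearMap.toMatrix_toLin _ _ _).symm
  have hcomp : ((Vl E)ᗮ.subtype ∘ₗ ((Vl E)ᗮ.orthogonalProjectionOnto).toLinearMap) ∘ₗ
      Matrix.toEuclideanLin E = 0 := by
    apply LinearMap.ext
    intro x
    have hm : Matrix.toEuclideanLin E x ∈ (Vl E)ᗮᗮ :=
      (Vl E).le_orthogonal_orthogonal (LinearMap.mem_range_self _ x)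
    simp [Submodule.orthogonalProjectionOnto_apply_of_mem_orthogonal hm]
  calc projMat (Vl E)ᗮ * E
      = LinearMap.toMatrix (EuclideanSpace.basisFun (Fin d2) ℝ).toBasis
          (EuclideanSpace.basisFun (Fin d1) ℝ).toBasis
          (((Vl E)ᗮ.subtype ∘ₗ ((Vl E)ᗮ.orthogonalProjectionOnto).toLinearMap) ∘ₗ
            Matrix.toEuclideanLin E) := by
        rw [projMat, LinearMap.toMatrix_comp _ (EuclideanSpace.basisFun (Fin d1) ℝ).toBasis _,
          ← hE]
    _ = 0 := by rw [hcomp, map_zero]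

lemma projMat_symm {d : ℕ} (V : Submodule ℝ (EuclideanSpace ℝ (Fin d))) :
    (projMat V)ᵀ = projMat V := by
  have key : ∀ a b, projMat V a b =
      inner (𝕜 := ℝ) (EuclideanSpace.single a (1:ℝ))
        ((V.orthogonalProjectionOnto) (EuclideanSpace.single b 1) : EuclideanSpace ℝ (Fin d)) := by
    intro a b
    rw [projMat, LinearMap.toMatrix_apply]
    simp [EuclideanSpace.inner_single_left, EuclideanSpace.basisFun_apply]
  ext i j
  rw [Matrix.transpose_apply, key, key]
  rw [← Submodule.starProjection_apply, ← Submodule.starProjection_apply,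
    ← Submodule.inner_starProjection_left_eq_right]
  exact real_inner_comm _ _

lemma ct_mul_Pperp {d1 d2 : ℕ} (Bstar Θ : Matrix (Fin d1) (Fin d2) ℝ) :
    Bstarᴴ * Pperp Bstar Θ = 0 := by
  have hQl : projMat (Vl Bstar)ᗮ * Bstar = 0 := projMat_orthComp_mul Bstar
  have h1 : Bstarᴴ * projMat (Vl Bstar)ᗮ = 0 := by
    have h := congrArg Matrix.transpose hQl
    rwa [Matrix.transpose_mul, projMat_symm, Matrix.transpose_zero, ← ctR] at h
  rw [Pperp, ← Matrix.mul_assoc, ← Matrix.mul_assoc, h1, Matrix.zero_mul, Matrix.zero_mul]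

lemma mul_Pperp_ct {d1 d2 : ℕ} (Bstar Θ : Matrix (Fin d1) (Fin d2) ℝ) :
    Bstar * (Pperp Bstar Θ)ᴴ = 0 := by
  have hQr : projMat (Vr Bstar)ᗮ * Bstarᵀ = 0 := projMat_orthComp_mul Bstarᵀ
  have h2 : Bstar * projMat (Vr Bstar)ᗮ = 0 := by
    have h := congrArg Matrix.transpose hQr
    rwa [Matrix.transpose_mul, projMat_symm, Matrix.transpose_zero,
      Matrix.transpose_transpose] at h
  have hctQr : (projMat (Vr Bstar)ᗮ)ᴴ = projMat (Vr Bstar)ᗮ := by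
    rw [ctR, projMat_symm]
  rw [Pperp, Matrix.conjTranspose_mul, hctQr, ← Matrix.mul_assoc, h2, Matrix.zero_mul]

end Aux

/-- Norm decomposition with projections:
`‖B*‖_* − ‖B̂‖_* ≤ ‖P_{B*}(Θ)‖_* − ‖P⊥_{B*}(Θ)‖_*` for `Θ = B̂ − B*`. -/
theorem nuclear_norm_decomposition {d1 d2 : ℕ} (Bstar Bhat : Matrix (Fin d1) (Fin d2) ℝ) :
    nuclearNorm Bstar - nuclearNorm Bhat ≤
      nuclearNorm (Pproj Bstar (Bhat - Bstar)) -
        nuclearNorm (Pperp Bstar (Bhat - Bstar)) := by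
  set Θ := Bhat - Bstar with hΘ
  set N := Pperp Bstar Θ with hN
  have hadd : nuclearNorm (Bstar + N) = nuclearNorm Bstar + nuclearNorm N :=
    nuclearNorm_add_of_orth _ _ (ct_mul_Pperp Bstar Θ) (mul_Pperp_ct Bstar Θ)
  have hdecomp : Bstar + N = Bhat + -(Pproj Bstar Θ) := by
    rw [Pproj, hΘ, hN, hΘ]
    abel
  have htri : nuclearNorm (Bstar + N) ≤ nuclearNorm Bhat + nuclearNorm (Pproj Bstar Θ) := by
    rw [hdecomp]
    calc nuclearNorm (Bhat + -(Pproj Bstar Θ))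
        ≤ nuclearNorm Bhat + nuclearNorm (-(Pproj Bstar Θ)) := nuclearNorm_add_le _ _
      _ = nuclearNorm Bhat + nuclearNorm (Pproj Bstar Θ) := by rw [nuclearNorm_neg]
  linarith
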